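/- Let G(t) = ∫ Φ_θ(t − u/n) s^{*n}(u) du, where Φ_θ is the CDF of a centered Gaussian with variance θ² and s is a probability density satisfying s^{*n}(u) ≤ Bn/(n^{(β+1)/β} + |u|^{1+β}) for constants B > 0 and β ≥ 1. Then for every t > 0, 1 − G(t) ≤ exp(−t²/(8θ²)) + 2^β B / (β n^{β−1} t^β). -/

import Mathlib

open MeasureTheory Real
open Set

/-- `convIter s k` is the `(k+1)`-fold self-convolution of `s`:
    `convIter s 0 = s` and `convIter s (n-1) = s^{*n}`. -/
noncomputable def convIter (s : ℝ → ℝ) : ℕ → ℝ → ℝ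
  | 0 => s
  | k + 1 => fun x => ∫ y : ℝ, s y * convIter s k (x - y)

lemma convIter_nonneg (s : ℝ → ℝ) (hs : ∀ x, 0 ≤ s x) (k : ℕ) : ∀ x, 0 ≤ convIter s k x := by
  induction k with
  | zero => exact hs
  | succ k ih => exact fun x => integral_nonneg fun y => mul_nonneg (hs y) (ih _)

lemma convIter_eq_conv (s : ℝ → ℝ) (k : ℕ) :
    convIter s (k + 1) = convolution s (convIter s k) (ContinuousLinearMap.mul ℝ ℝ) volume := by
  ext x
  simp [convIter, convolution]

lemma convIter_integrable (s : ℝ → ℝ) (hs : Integrable s) (k : ℕ) :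
    Integrable (convIter s k) := by
  induction k with
  | zero => exact hs
  | succ k ih =>
    rw [convIter_eq_conv]
    exact hs.integrable_convolution (ContinuousLinearMap.mul ℝ ℝ) ih

lemma convIter_integral (s : ℝ → ℝ) (hs : Integrable s) (htot : ∫ x, s x = 1) (k : ℕ) :
    ∫ x, convIter s k x = 1 := by
  induction k with
  | zero => exact htot
  | succ k ih =>
    rw [convIter_eq_conv, integral_convolution (ContinuousLinearMap.mul ℝ ℝ) hs
      (convIter_integrable s hs k)]
    simp [htot, ih]

lemma gauss_int {θ : ℝ} (hθ : 0 < θ) :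
    Integrable (fun v : ℝ => Real.exp (-v ^ 2 / (2 * θ ^ 2))) := by
  have hb : 0 < (2 * θ ^ 2)⁻¹ := by positivity
  have h := integrable_exp_neg_mul_sq hb
  refine h.congr ?_
  refine Filter.Eventually.of_forall fun v => ?_
  simp only []
  rw [show -(2 * θ ^ 2)⁻¹ * v ^ 2 = -v ^ 2 / (2 * θ ^ 2) by ring]

lemma gauss_total {θ : ℝ} (hθ : 0 < θ) :
    ∫ v : ℝ, Real.exp (-v ^ 2 / (2 * θ ^ 2)) = Real.sqrt (2 * Real.pi) * θ := by
  have h : ∀ v : ℝ, -v ^ 2 / (2 * θ ^ 2) = -(2 * θ ^ 2)⁻¹ * v ^ 2 := fun v => by ring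
  simp_rw [h, integral_gaussian]
  rw [div_inv_eq_mul, show Real.pi * (2 * θ ^ 2) = (2 * Real.pi) * θ ^ 2 by ring,
    Real.sqrt_mul (by positivity), Real.sqrt_sq hθ.le]

lemma gauss_tail {θ : ℝ} (hθ : 0 < θ) {a : ℝ} (ha : 0 ≤ a) :
    ∫ v in Ioi a, Real.exp (-v ^ 2 / (2 * θ ^ 2))
      ≤ Real.exp (-a ^ 2 / (2 * θ ^ 2)) * (Real.sqrt (2 * Real.pi) * θ) := by
  have hint := gauss_int hθ
  have hshift : Integrable (fun v : ℝ => Real.exp (-(v - a) ^ 2 / (2 * θ ^ 2))) := by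
    simpa using (gauss_int hθ).comp_sub_right a
  calc ∫ v in Ioi a, Real.exp (-v ^ 2 / (2 * θ ^ 2))
      ≤ ∫ v in Ioi a, Real.exp (-a ^ 2 / (2 * θ ^ 2)) * Real.exp (-(v - a) ^ 2 / (2 * θ ^ 2)) := by
        refine setIntegral_mono_on hint.integrableOn
          ((hshift.const_mul _).integrableOn) measurableSet_Ioi fun v hv => ?_
        rw [← Real.exp_add]
        apply Real.exp_le_exp.2
        rw [← add_div, div_le_div_iff_of_pos_right (by positivity)]
        nlinarith [le_of_lt (mem_Ioi.1 hv)]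
    _ ≤ ∫ v : ℝ, Real.exp (-a ^ 2 / (2 * θ ^ 2)) * Real.exp (-(v - a) ^ 2 / (2 * θ ^ 2)) :=
        setIntegral_le_integral (hshift.const_mul _)
          (Filter.Eventually.of_forall fun v => by positivity)
    _ = Real.exp (-a ^ 2 / (2 * θ ^ 2)) * (Real.sqrt (2 * Real.pi) * θ) := by
        rw [integral_const_mul]
        congr 1
        rw [← gauss_total hθ]
        exact integral_sub_right_eq_self (fun v => Real.exp (-v ^ 2 / (2 * θ ^ 2))) a

theorem smoothed_mean_tail_bound
    (θ B β : ℝ) (n : ℕ)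
    (hθ : 0 < θ) (hB : 0 < B) (hβ : 1 ≤ β) (hn : 0 < n)
    (s : ℝ → ℝ)
    (hs_nonneg : ∀ x, 0 ≤ s x) (hs_int : Integrable s)
    (hs_tot : ∫ x, s x = 1)
    (hs_bound : ∀ u : ℝ,
      convIter s (n - 1) u
        ≤ B * n / ((n : ℝ) ^ ((β + 1) / β) + |u| ^ (1 + β))) :
    ∀ t : ℝ, 0 < t →
      1 - (∫ u : ℝ,
            ((Real.sqrt (2 * Real.pi) * θ)⁻¹ *
              ∫ v in Set.Iic (t - u / n), Real.exp (-v ^ 2 / (2 * θ ^ 2))) *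
              convIter s (n - 1) u)
        ≤ Real.exp (-t ^ 2 / (8 * θ ^ 2))
          + (2 : ℝ) ^ β * B / (β * (n : ℝ) ^ (β - 1) * t ^ β) := by
  intro t ht
  have hn' : (0:ℝ) < n := Nat.cast_pos.2 hn
  set k : ℝ → ℝ := convIter s (n - 1) with hkdef
  have hk_nonneg : ∀ x, 0 ≤ k x := convIter_nonneg s hs_nonneg (n - 1)
  have hk_int : Integrable k := convIter_integrable s hs_int (n - 1)
  have hk_tot : ∫ x, k x = 1 := convIter_integral s hs_int hs_tot (n - 1)
  have htot_pos : (0:ℝ) < Real.sqrt (2 * Real.pi) * θ := by positivity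
  set c : ℝ := (Real.sqrt (2 * Real.pi) * θ)⁻¹ with hcdef
  have hc_pos : 0 < c := by rw [hcdef]; positivity
  set F : ℝ → ℝ := fun x => ∫ v in Iic x, Real.exp (-v ^ 2 / (2 * θ ^ 2)) with hFdef
  have hg_int := gauss_int hθ
  have hg_nonneg : ∀ v : ℝ, 0 ≤ Real.exp (-v ^ 2 / (2 * θ ^ 2)) := fun v => (Real.exp_pos _).le
  have hF_mono : Monotone F := fun x y hxy =>
    setIntegral_mono_set hg_int.integrableOn (Filter.Eventually.of_forall hg_nonneg)
      (HasSubset.Subset.eventuallyLE (Iic_subset_Iic.2 hxy))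
  have hF_meas : Measurable F := hF_mono.measurable
  have hF_nonneg : ∀ x, 0 ≤ F x := fun x =>
    setIntegral_nonneg measurableSet_Iic fun v _ => hg_nonneg v
  have hF_le : ∀ x, F x ≤ Real.sqrt (2 * Real.pi) * θ := fun x => by
    rw [← gauss_total hθ]
    exact setIntegral_le_integral hg_int (Filter.Eventually.of_forall hg_nonneg)
  set Φ : ℝ → ℝ := fun x => c * F x with hΦdef
  have hΦ_nonneg : ∀ x, 0 ≤ Φ x := fun x => mul_nonneg hc_pos.le (hF_nonneg x)
  have hΦ_le_one : ∀ x, Φ x ≤ 1 := fun x =>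
    (mul_le_mul_of_nonneg_left (hF_le x) hc_pos.le).trans_eq (inv_mul_cancel₀ htot_pos.ne')
  have hΦ_mono : Monotone Φ := fun x y hxy =>
    mul_le_mul_of_nonneg_left (hF_mono hxy) hc_pos.le
  -- tail bound at t/2
  have hΦ_tail : 1 - Φ (t / 2) ≤ Real.exp (-t ^ 2 / (8 * θ ^ 2)) := by
    have hsplit : F (t / 2) + (∫ v in Ioi (t / 2), Real.exp (-v ^ 2 / (2 * θ ^ 2)))
        = Real.sqrt (2 * Real.pi) * θ := by
      rw [← gauss_total hθ]
      exact intervalIntegral.integral_Iic_add_Ioi hg_int.integrableOn hg_int.integrableOn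
    have htail := gauss_tail hθ (le_of_lt (half_pos ht))
    have h8 : -(t / 2) ^ 2 / (2 * θ ^ 2) = -t ^ 2 / (8 * θ ^ 2) := by ring
    have h1 : 1 - Φ (t / 2) = c * ∫ v in Ioi (t / 2), Real.exp (-v ^ 2 / (2 * θ ^ 2)) := by
      have : (1:ℝ) = c * (Real.sqrt (2 * Real.pi) * θ) := (inv_mul_cancel₀ htot_pos.ne').symm
      rw [this, hΦdef]
      simp only []
      rw [← hsplit]
      ring
    rw [h1, ← h8]
    calc c * ∫ v in Ioi (t / 2), Real.exp (-v ^ 2 / (2 * θ ^ 2))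
        ≤ c * (Real.exp (-(t / 2) ^ 2 / (2 * θ ^ 2)) * (Real.sqrt (2 * Real.pi) * θ)) :=
          mul_le_mul_of_nonneg_left htail hc_pos.le
      _ = Real.exp (-(t / 2) ^ 2 / (2 * θ ^ 2)) := by
          rw [hcdef]
          field_simp
  -- integrability of Φ(t - ·/n) * k
  have haff : Measurable fun u : ℝ => t - u / (n:ℝ) :=
    measurable_const.sub (measurable_id.div_const _)
  have hΦu_meas : AEStronglyMeasurable (fun u : ℝ => Φ (t - u / n)) volume :=
    ((hF_meas.comp haff).const_mul c).aestronglyMeasurable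
  have hΦk_int : Integrable fun u : ℝ => Φ (t - u / n) * k u :=
    hk_int.bdd_mul (c := 1) hΦu_meas (Filter.Eventually.of_forall fun u => by
      rw [Real.norm_eq_abs, abs_of_nonneg (hΦ_nonneg _)]; exact hΦ_le_one _)
  have hint1 : Integrable fun u : ℝ => (1 - Φ (t - u / n)) * k u := by
    refine (hk_int.sub hΦk_int).congr (Filter.Eventually.of_forall fun u => ?_)
    simp only [Pi.sub_apply]
    ring
  set m : ℝ := (n : ℝ) * t / 2 with hmdef
  have hm_pos : 0 < m := by rw [hmdef]; positivity
  have key : 1 - (∫ u : ℝ, Φ (t - u / n) * k u) = ∫ u : ℝ, (1 - Φ (t - u / n)) * k u := by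
    have heq : (fun u : ℝ => (1 - Φ (t - u / n)) * k u)
        = fun u : ℝ => k u - Φ (t - u / n) * k u := by ext u; ring
    rw [heq, integral_sub hk_int hΦk_int, hk_tot]
  have hsplit2 : (∫ u : ℝ, (1 - Φ (t - u / n)) * k u)
      = (∫ u in Iic m, (1 - Φ (t - u / n)) * k u) + ∫ u in Ioi m, (1 - Φ (t - u / n)) * k u :=
    (intervalIntegral.integral_Iic_add_Ioi hint1.integrableOn hint1.integrableOn).symm
  -- part 1
  have part1 : (∫ u in Iic m, (1 - Φ (t - u / n)) * k u) ≤ Real.exp (-t ^ 2 / (8 * θ ^ 2)) := by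
    have hE : (0:ℝ) ≤ Real.exp (-t ^ 2 / (8 * θ ^ 2)) := (Real.exp_pos _).le
    calc (∫ u in Iic m, (1 - Φ (t - u / n)) * k u)
        ≤ ∫ u in Iic m, Real.exp (-t ^ 2 / (8 * θ ^ 2)) * k u := by
          refine setIntegral_mono_on hint1.integrableOn
            ((hk_int.const_mul _).integrableOn) measurableSet_Iic fun u hu => ?_
          refine mul_le_mul_of_nonneg_right ?_ (hk_nonneg u)
          refine le_trans ?_ hΦ_tail
          have h2 : t / 2 ≤ t - u / n := by
            rw [mem_Iic, hmdef] at hu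
            have h3 : u / n ≤ t / 2 := (div_le_iff₀ hn').2 (by linarith)
            linarith
          linarith [hΦ_mono h2]
      _ = Real.exp (-t ^ 2 / (8 * θ ^ 2)) * ∫ u in Iic m, k u := integral_const_mul _ _
      _ ≤ Real.exp (-t ^ 2 / (8 * θ ^ 2)) * 1 := by
          refine mul_le_mul_of_nonneg_left ?_ hE
          rw [← hk_tot]
          exact setIntegral_le_integral hk_int (Filter.Eventually.of_forall hk_nonneg)
      _ = Real.exp (-t ^ 2 / (8 * θ ^ 2)) := mul_one _
  -- part 2
  have hβ' : -(1 + β) < -1 := by linarith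
  have hrint : IntegrableOn (fun u : ℝ => B * n * u ^ (-(1 + β))) (Ioi m) :=
    (integrableOn_Ioi_rpow_of_lt hβ' hm_pos).const_mul _
  have part2 : (∫ u in Ioi m, (1 - Φ (t - u / n)) * k u)
      ≤ (2 : ℝ) ^ β * B / (β * (n : ℝ) ^ (β - 1) * t ^ β) := by
    calc (∫ u in Ioi m, (1 - Φ (t - u / n)) * k u)
        ≤ ∫ u in Ioi m, k u := by
          refine setIntegral_mono_on hint1.integrableOn hk_int.integrableOn
            measurableSet_Ioi fun u hu => ?_
          nlinarith [hΦ_nonneg (t - u / n), hk_nonneg u, hΦ_le_one (t - u / n)]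
      _ ≤ ∫ u in Ioi m, B * n * u ^ (-(1 + β)) := by
          refine setIntegral_mono_on hk_int.integrableOn hrint measurableSet_Ioi fun u hu => ?_
          have hu0 : 0 < u := lt_trans hm_pos (mem_Ioi.1 hu)
          have hup : (0:ℝ) < u ^ (1 + β) := Real.rpow_pos_of_pos hu0 _
          have h1 : k u ≤ B * n / ((n : ℝ) ^ ((β + 1) / β) + |u| ^ (1 + β)) := hs_bound u
          rw [abs_of_pos hu0] at h1
          refine h1.trans ?_
          rw [Real.rpow_neg hu0.le, ← div_eq_mul_inv]
          refine div_le_div_of_nonneg_left (by positivity) hup ?_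
          have : (0:ℝ) ≤ (n : ℝ) ^ ((β + 1) / β) := Real.rpow_nonneg hn'.le _
          linarith
      _ = B * n * (m ^ (-β) / β) := by
          rw [integral_const_mul, integral_Ioi_rpow_of_lt hβ' hm_pos]
          congr 1
          rw [show -(1 + β) + 1 = -β by ring]
          rw [neg_div_neg_eq]
      _ = (2 : ℝ) ^ β * B / (β * (n : ℝ) ^ (β - 1) * t ^ β) := by
          have hmβ : m ^ (-β) = 2 ^ β / ((n : ℝ) ^ β * t ^ β) := by
            rw [hmdef, Real.rpow_neg (by positivity), div_rpow (by positivity) (by norm_num),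
              Real.mul_rpow hn'.le ht.le]
            rw [inv_div]
          have hnβ : (n : ℝ) ^ β = (n : ℝ) ^ (β - 1) * n := by
            nth_rewrite 3 [← Real.rpow_one (n:ℝ)]
            rw [← Real.rpow_add hn', sub_add_cancel]
          rw [hmβ, hnβ]
          have h1 : (0:ℝ) < (n : ℝ) ^ (β - 1) := Real.rpow_pos_of_pos hn' _
          have h2 : (0:ℝ) < t ^ β := Real.rpow_pos_of_pos ht _
          have h3 : (0:ℝ) < β := lt_of_lt_of_le one_pos hβ
          field_simp
  calc 1 - (∫ u : ℝ,
            ((Real.sqrt (2 * Real.pi) * θ)⁻¹ *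
              ∫ v in Set.Iic (t - u / n), Real.exp (-v ^ 2 / (2 * θ ^ 2))) * k u)
      = 1 - ∫ u : ℝ, Φ (t - u / n) * k u := rfl
    _ = ∫ u : ℝ, (1 - Φ (t - u / n)) * k u := key
    _ = (∫ u in Iic m, (1 - Φ (t - u / n)) * k u)
        + ∫ u in Ioi m, (1 - Φ (t - u / n)) * k u := hsplit2
    _ ≤ Real.exp (-t ^ 2 / (8 * θ ^ 2))
        + (2 : ℝ) ^ β * B / (β * (n : ℝ) ^ (β - 1) * t ^ β) := add_le_add part1 part2
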